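/- arXiv:1805.07217 — 4 statements merged into one kernel-verified Lean document; each statement's English description precedes it below -/
import Mathlib

section
/- Let t = (−1 + √3 + √(−5 + 4√3))/3. Then t satisfies the quadratic equation (1 − cos(4π/3))(1 − cos(π/3))t² + (cos(5π/6) + cos(4π/3 + π/3) − cos(4π/3) − cos(π/3))t + (cos(5π/6) − sin(4π/3)sin(π/3)) = 0, and 0 < t < 1. -/
open Real

theorem stmt_5 :
    let t : ℝ := (-1 + Real.sqrt 3 + Real.sqrt (-5 + 4 * Real.sqrt 3)) / 3
    (1 - Real.cos (4 * π / 3)) * (1 - Real.cos (π / 3)) * t ^ 2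
      + (Real.cos (5 * π / 6) + Real.cos (4 * π / 3 + π / 3)
        - Real.cos (4 * π / 3) - Real.cos (π / 3)) * t
      + (Real.cos (5 * π / 6) - Real.sin (4 * π / 3) * Real.sin (π / 3)) = 0
    ∧ 0 < t ∧ t < 1 := by
  intro t
  have h3 : Real.sqrt 3 ^ 2 = 3 := Real.sq_sqrt (by norm_num)
  have h3lb : (1.7 : ℝ) ≤ Real.sqrt 3 := by
    nlinarith [Real.sqrt_nonneg 3, h3]
  have h3ub : Real.sqrt 3 ≤ 1.8 := by
    nlinarith [Real.sqrt_nonneg 3, h3]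
  have hnn : (0 : ℝ) ≤ -5 + 4 * Real.sqrt 3 := by nlinarith
  have hs : Real.sqrt (-5 + 4 * Real.sqrt 3) ^ 2 = -5 + 4 * Real.sqrt 3 :=
    Real.sq_sqrt hnn
  have hsnn : (0 : ℝ) ≤ Real.sqrt (-5 + 4 * Real.sqrt 3) := Real.sqrt_nonneg _
  have hslb : (1.3 : ℝ) ≤ Real.sqrt (-5 + 4 * Real.sqrt 3) := by nlinarith
  have hsub : Real.sqrt (-5 + 4 * Real.sqrt 3) ≤ 1.5 := by nlinarith
  have ht : t = (-1 + Real.sqrt 3 + Real.sqrt (-5 + 4 * Real.sqrt 3)) / 3 := rfl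
  have hc1 : Real.cos (4 * π / 3) = -(1/2) := by
    rw [show (4 * π / 3 : ℝ) = π + π / 3 by ring, Real.cos_add, Real.cos_pi,
      Real.sin_pi, Real.cos_pi_div_three]
    ring
  have hs1 : Real.sin (4 * π / 3) = -(Real.sqrt 3 / 2) := by
    rw [show (4 * π / 3 : ℝ) = π + π / 3 by ring, Real.sin_add, Real.cos_pi,
      Real.sin_pi, Real.sin_pi_div_three]
    ring
  have hc2 : Real.cos (4 * π / 3 + π / 3) = 1/2 := by
    rw [show (4 * π / 3 + π / 3 : ℝ) = π + (π - π / 3) by ring, Real.cos_add,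
      Real.cos_pi, Real.sin_pi, Real.cos_pi_sub, Real.cos_pi_div_three]
    ring
  have hc3 : Real.cos (5 * π / 6) = -(Real.sqrt 3 / 2) := by
    rw [show (5 * π / 6 : ℝ) = π - π / 6 by ring, Real.cos_pi_sub,
      Real.cos_pi_div_six]
  refine ⟨?_, ?_, ?_⟩
  · rw [hc1, hs1, hc2, hc3, Real.cos_pi_div_three, Real.sin_pi_div_three]
    rw [ht]
    nlinarith [hs, h3, sq_nonneg (Real.sqrt 3 * Real.sqrt (-5 + 4 * Real.sqrt 3))]
  · rw [ht]; nlinarith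
  · rw [ht]; nlinarith
end

section
/- If a ∈ (0, π/2) satisfies (sec a · cot(π/6)) · (sec a · cot(5π/12)) = 1, then cos a = √(−3 + 2√3). -/
open Real

theorem stmt_7 (a : ℝ) (ha : a ∈ Set.Ioo 0 (π / 2))
    (h : ((1 / Real.cos a) * (Real.cos (π / 6) / Real.sin (π / 6)))
        * ((1 / Real.cos a) * (Real.cos (5 * π / 12) / Real.sin (5 * π / 12))) = 1) :
    Real.cos a = Real.sqrt (-3 + 2 * Real.sqrt 3) := by
  obtain ⟨ha0, ha1⟩ := ha
  have hc : 0 < Real.cos a := Real.cos_pos_of_mem_Ioo ⟨by linarith [Real.pi_pos], ha1⟩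
  have h5 : (5 * π / 12 : ℝ) = π / 4 + π / 6 := by ring
  have hs2 : Real.sqrt 2 ^ 2 = 2 := Real.sq_sqrt (by norm_num)
  have hs3 : Real.sqrt 3 ^ 2 = 3 := Real.sq_sqrt (by norm_num)
  have hs2p : (0:ℝ) < Real.sqrt 2 := Real.sqrt_pos.mpr (by norm_num)
  have hs3p : (0:ℝ) < Real.sqrt 3 := Real.sqrt_pos.mpr (by norm_num)
  have hcos5 : Real.cos (5 * π / 12) = Real.sqrt 2 * (Real.sqrt 3 - 1) / 4 := by
    rw [h5, Real.cos_add, Real.cos_pi_div_four, Real.sin_pi_div_four,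
      Real.cos_pi_div_six, Real.sin_pi_div_six]
    ring
  have hsin5 : Real.sin (5 * π / 12) = Real.sqrt 2 * (Real.sqrt 3 + 1) / 4 := by
    rw [h5, Real.sin_add, Real.cos_pi_div_four, Real.sin_pi_div_four,
      Real.cos_pi_div_six, Real.sin_pi_div_six]
    ring
  have hr : Real.cos (5 * π / 12) / Real.sin (5 * π / 12) = 2 - Real.sqrt 3 := by
    rw [hcos5, hsin5]
    rw [div_eq_iff (by positivity)]
    nlinarith [hs2, hs3]
  have hr6 : Real.cos (π / 6) / Real.sin (π / 6) = Real.sqrt 3 := by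
    rw [Real.cos_pi_div_six, Real.sin_pi_div_six]; ring
  rw [hr, hr6] at h
  have hsq : Real.cos a ^ 2 = -3 + 2 * Real.sqrt 3 := by
    have hcne : Real.cos a ≠ 0 := ne_of_gt hc
    field_simp at h
    nlinarith [hs3, h]
  rw [← hsq, Real.sqrt_sq hc.le]
end

section
/- Let α = arctan((4 + 3√3 − 2√(−5+4√3) + 4√3·√(−5+4√3))/33) and γ = π − arctan((12 + 7√3 + 6√(−5+4√3) + 4√3·√(−5+4√3))/3). Then tan(α + γ) = −√3. -/
open Real

theorem stmt_8 :
    let α : ℝ := Real.arctan ((4 + 3 * Real.sqrt 3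
      - 2 * Real.sqrt (-5 + 4 * Real.sqrt 3)
      + 4 * Real.sqrt 3 * Real.sqrt (-5 + 4 * Real.sqrt 3)) / 33)
    let γ : ℝ := π - Real.arctan ((12 + 7 * Real.sqrt 3
      + 6 * Real.sqrt (-5 + 4 * Real.sqrt 3)
      + 4 * Real.sqrt 3 * Real.sqrt (-5 + 4 * Real.sqrt 3)) / 3)
    Real.tan (α + γ) = -Real.sqrt 3 := by
  intro α γ
  set r := Real.sqrt 3 with hrdef
  set s := Real.sqrt (-5 + 4 * Real.sqrt 3) with hsdef
  have hr : r ^ 2 = 3 := Real.sq_sqrt (by norm_num)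
  have hr1 : (1:ℝ) ≤ r := by
    rw [hrdef]
    nlinarith [Real.sq_sqrt (show (0:ℝ) ≤ 3 by norm_num), Real.sqrt_nonneg 3]
  have hs0 : 0 ≤ s := Real.sqrt_nonneg _
  have hs : s ^ 2 = -5 + 4 * r := Real.sq_sqrt (by nlinarith)
  set a : ℝ := (4 + 3 * r - 2 * s + 4 * r * s) / 33 with hadef
  set b : ℝ := (12 + 7 * r + 6 * s + 4 * r * s) / 3 with hbdef
  have ha0 : 0 < a := by
    rw [hadef]
    have h1 : 0 ≤ 4 * r * s - 2 * s := by nlinarith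
    nlinarith
  have hb0 : 0 < b := by
    rw [hbdef]; nlinarith
  have hden : (0:ℝ) < 1 + a * b := by nlinarith
  have key : a - b = -r * (1 + a * b) := by
    rw [hadef, hbdef]
    field_simp
    linear_combination (16*r^3 + 16*r^2 - 12*r) * hs + (64*r^2 + 40*r*s + 5*r + 68*s + 128) * hr
  set x := Real.arctan a with hx
  set y := Real.arctan b with hy
  have hag : α + γ = (x - y) + π := by
    show Real.arctan a + (π - Real.arctan b) = (x - y) + π
    rw [← hx, ← hy]; ring
  have hcx : 0 < Real.cos x := Real.cos_arctan_pos a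
  have hcy : 0 < Real.cos y := Real.cos_arctan_pos b
  have hsx : Real.sin x = a * Real.cos x := by
    have := Real.tan_arctan a
    rw [← hx, Real.tan_eq_sin_div_cos] at this
    field_simp at this
    linarith [this]
  have hsy : Real.sin y = b * Real.cos y := by
    have := Real.tan_arctan b
    rw [← hy, Real.tan_eq_sin_div_cos] at this
    field_simp at this
    linarith [this]
  rw [hag, Real.tan_add_pi, Real.tan_eq_sin_div_cos, Real.sin_sub, Real.cos_sub,
    hsx, hsy]
  rw [div_eq_iff (by nlinarith [mul_pos (mul_pos hcx hcy) hden])]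
  linear_combination (Real.cos x * Real.cos y) * key
end

section
/- The quartic polynomial 49t⁴ + (16−18√2)t³ + (48−54√2)t² + (52−34√2)t + 43−30√2 has exactly four real roots, and its largest real root t satisfies 0.779 < t < 0.780. -/
open Polynomial

noncomputable def fP (t : ℝ) : ℝ :=
    49 * t ^ 4 + (16 - 18 * Real.sqrt 2) * t ^ 3
      + (48 - 54 * Real.sqrt 2) * t ^ 2 + (52 - 34 * Real.sqrt 2) * t
      + (43 - 30 * Real.sqrt 2)

lemma sqrt2_lb : 1.41421 < Real.sqrt 2 := by
  have := Real.sq_sqrt (by norm_num : (2:ℝ) ≥ 0)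
  nlinarith [Real.sqrt_nonneg 2]

lemma sqrt2_ub : Real.sqrt 2 < 1.41422 := by
  have := Real.sq_sqrt (by norm_num : (2:ℝ) ≥ 0)
  nlinarith [Real.sqrt_nonneg 2]

lemma fP_cont : Continuous fP := by
  unfold fP; continuity

lemma ivt_root {a b : ℝ} (hab : a < b) (ha : fP a < 0) (hb : 0 < fP b) :
    ∃ t ∈ Set.Ioo a b, fP t = 0 := by
  have h := intermediate_value_Ioo hab.le (fP_cont.continuousOn)
  have : (0:ℝ) ∈ Set.Ioo (fP a) (fP b) := ⟨ha, hb⟩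
  obtain ⟨t, ht, hft⟩ := h this
  exact ⟨t, ht, hft⟩

lemma ivt_root' {a b : ℝ} (hab : a < b) (ha : 0 < fP a) (hb : fP b < 0) :
    ∃ t ∈ Set.Ioo a b, fP t = 0 := by
  have h := intermediate_value_Ioo' hab.le (fP_cont.continuousOn)
  have : (0:ℝ) ∈ Set.Ioo (fP b) (fP a) := ⟨hb, ha⟩
  obtain ⟨t, ht, hft⟩ := h this
  exact ⟨t, ht, hft⟩

noncomputable def pP : ℝ[X] :=
  C 49 * X ^ 4 + C (16 - 18 * Real.sqrt 2) * X ^ 3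
    + C (48 - 54 * Real.sqrt 2) * X ^ 2 + C (52 - 34 * Real.sqrt 2) * X
    + C (43 - 30 * Real.sqrt 2)

lemma pP_eval (t : ℝ) : pP.eval t = fP t := by
  simp [pP, fP]

lemma pP_natDegree : pP.natDegree = 4 := by
  unfold pP
  compute_degree!

lemma pP_ne_zero : pP ≠ 0 := by
  intro h
  have : pP.natDegree = 0 := by rw [h]; simp
  rw [pP_natDegree] at this
  norm_num at this

theorem stmt_13 :
    ∃ t₁ t₂ t₃ t₄ : ℝ, t₁ < t₂ ∧ t₂ < t₃ ∧ t₃ < t₄ ∧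
      (∀ t ∈ ({t₁, t₂, t₃, t₄} : Set ℝ),
        49 * t ^ 4 + (16 - 18 * Real.sqrt 2) * t ^ 3
          + (48 - 54 * Real.sqrt 2) * t ^ 2 + (52 - 34 * Real.sqrt 2) * t
          + (43 - 30 * Real.sqrt 2) = 0) ∧
      (∀ t : ℝ, 49 * t ^ 4 + (16 - 18 * Real.sqrt 2) * t ^ 3
          + (48 - 54 * Real.sqrt 2) * t ^ 2 + (52 - 34 * Real.sqrt 2) * t
          + (43 - 30 * Real.sqrt 2) = 0 → t ∈ ({t₁, t₂, t₃, t₄} : Set ℝ)) ∧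
      0.779 < t₄ ∧ t₄ < 0.780 := by
  have hl := sqrt2_lb
  have hu := sqrt2_ub
  have hm1 : 0 < fP (-1) := by unfold fP; nlinarith
  have hm05 : fP (-0.5) < 0 := by unfold fP; nlinarith
  have h0 : 0 < fP 0 := by unfold fP; nlinarith
  have h05 : fP 0.5 < 0 := by unfold fP; nlinarith
  have h779 : fP 0.779 < 0 := by unfold fP; nlinarith
  have h780 : 0 < fP 0.780 := by unfold fP; nlinarith
  obtain ⟨t₁, ht₁, hf₁⟩ := ivt_root' (by norm_num : (-1:ℝ) < -0.5) hm1 hm05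
  obtain ⟨t₂, ht₂, hf₂⟩ := ivt_root (by norm_num : (-0.5:ℝ) < 0) hm05 h0
  obtain ⟨t₃, ht₃, hf₃⟩ := ivt_root' (by norm_num : (0:ℝ) < 0.5) h0 h05
  obtain ⟨t₄, ht₄, hf₄⟩ := ivt_root (by norm_num : (0.779:ℝ) < 0.780) h779 h780
  refine ⟨t₁, t₂, t₃, t₄, ?_, ?_, ?_, ?_, ?_, ht₄.1, ht₄.2⟩
  · exact lt_trans ht₁.2 ht₂.1
  · exact lt_trans ht₂.2 ht₃.1
  · exact lt_trans ht₃.2 (by norm_num : (0.5:ℝ) < 0.779) |>.trans ht₄.1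
  · intro t ht
    rcases ht with h | h | h | h
    · subst h; exact hf₁
    · subst h; exact hf₂
    · subst h; exact hf₃
    · simp only [Set.mem_singleton_iff] at h; subst h; exact hf₄
  · intro t ht
    by_contra hts
    simp only [Set.mem_insert_iff, Set.mem_singleton_iff, not_or] at hts
    obtain ⟨n1, n2, n3, n4⟩ := hts
    classical
    -- t, t₁, t₂, t₃, t₄ are 5 distinct roots of the degree-4 polynomial pP
    have hd12 : t₁ ≠ t₂ := ne_of_lt (lt_trans ht₁.2 ht₂.1)
    have hd13 : t₁ ≠ t₃ := ne_of_lt (lt_trans ht₁.2 (lt_trans ht₂.1 (lt_trans ht₂.2 ht₃.1)))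
    have h34 : t₃ < t₄ := lt_trans ht₃.2 ((by norm_num : (0.5:ℝ) < 0.779).trans ht₄.1)
    have hd14 : t₁ ≠ t₄ := ne_of_lt (lt_trans ht₁.2 (lt_trans ht₂.1 (lt_trans ht₂.2 (lt_trans ht₃.1 h34))))
    have hd23 : t₂ ≠ t₃ := ne_of_lt (lt_trans ht₂.2 ht₃.1)
    have hd24 : t₂ ≠ t₄ := ne_of_lt (lt_trans ht₂.2 (lt_trans ht₃.1 h34))
    have hd34 : t₃ ≠ t₄ := ne_of_lt h34
    set Z : Finset ℝ := {t, t₁, t₂, t₃, t₄} with hZ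
    have hcard : Z.card = 5 := by
      rw [hZ]
      rw [Finset.card_insert_of_notMem (by simp [n1, n2, n3, n4]),
          Finset.card_insert_of_notMem (by simp [hd12, hd13, hd14]),
          Finset.card_insert_of_notMem (by simp [hd23, hd24]),
          Finset.card_insert_of_notMem (by simp [hd34])]
      simp
    have hsub : Z.val ⊆ pP.roots := by
      intro x hx
      rw [Polynomial.mem_roots pP_ne_zero]
      have hx' : x ∈ Z := hx
      rw [hZ] at hx'
      simp only [Finset.mem_insert, Finset.mem_singleton] at hx'
      unfold Polynomial.IsRoot
      rw [pP_eval]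
      rcases hx' with h | h | h | h | h
      · subst h; exact ht
      · subst h; exact hf₁
      · subst h; exact hf₂
      · subst h; exact hf₃
      · subst h; exact hf₄
    have := Polynomial.card_le_degree_of_subset_roots hsub
    rw [hcard, pP_natDegree] at this
    norm_num at this
end
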